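/- Suppose η* : Ω → ℝ is strictly convex on a convex open set Ω ⊆ ℝ², η*(Ū) = 0, ∇η*(Ū) = 0, and G : Ω → ℝ² satisfies ∇η*(U)·G(U) > 0 for all U ∈ Ω \ {Ū}. Let K ⊆ Ω be compact. Then for every continuously differentiable η : Ω → ℝ with η(Ū) = 0 and ∇η(Ū) = 0 there exists a constant C_η ≥ 0 such that ∇(η + C_η η*)(U) · G(U) ≥ 0 for all U ∈ K. -/

import Mathlib

open Real Topology Filter

/-- Subgradient inequality for a differentiable convex function. -/
lemma subgrad_ineq {Ω : Set (ℝ × ℝ)} {f : ℝ × ℝ → ℝ} {x y : ℝ × ℝ}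
    (hconv : ConvexOn ℝ Ω f) (hx : x ∈ Ω) (hy : y ∈ Ω)
    (hd : DifferentiableAt ℝ f x) :
    f x + fderiv ℝ f x (y - x) ≤ f y := by
  set g : ℝ → ℝ := fun t => f (x + t • (y - x)) with hg
  have h1 : HasDerivAt (fun t : ℝ => x + t • (y - x)) (y - x) 0 := by
    simpa using ((hasDerivAt_id (0 : ℝ)).smul_const (y - x)).const_add x
  have h2 : HasFDerivAt f (fderiv ℝ f x) (x + (0 : ℝ) • (y - x)) := by
    simpa using hd.hasFDerivAt
  have hder : HasDerivAt g (fderiv ℝ f x (y - x)) 0 := h2.comp_hasDerivAt 0 h1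
  -- convexity of g on the preimage of Ω under the affine line map
  have hgconv : ConvexOn ℝ ((AffineMap.lineMap x y : ℝ →ᵃ[ℝ] ℝ × ℝ) ⁻¹' Ω) g := by
    have := hconv.comp_affineMap (AffineMap.lineMap x y : ℝ →ᵃ[ℝ] ℝ × ℝ)
    have heq : g = f ∘ (AffineMap.lineMap x y : ℝ →ᵃ[ℝ] ℝ × ℝ) := by
      funext t
      simp [hg, AffineMap.lineMap_apply, Function.comp, add_comm]
    rw [heq]; exact this
  have h0mem : (0 : ℝ) ∈ (AffineMap.lineMap x y : ℝ →ᵃ[ℝ] ℝ × ℝ) ⁻¹' Ω := by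
    simp [AffineMap.lineMap_apply, hx]
  have h1mem : (1 : ℝ) ∈ (AffineMap.lineMap x y : ℝ →ᵃ[ℝ] ℝ × ℝ) ⁻¹' Ω := by
    simp [AffineMap.lineMap_apply, hy]
  have hle := hgconv.le_slope_of_hasDerivAt h0mem h1mem one_pos hder
  have hslope : slope g 0 1 = f y - f x := by
    simp [slope_def_field, hg]
  rw [hslope] at hle
  linarith

theorem dissipative_after_adding_multiple_of_entropy
    (Ω : Set (ℝ × ℝ)) (hΩopen : IsOpen Ω) (hΩconv : Convex ℝ Ω)
    (ηs η : ℝ × ℝ → ℝ) (G : ℝ × ℝ → ℝ × ℝ) (Ubar : ℝ × ℝ) (hUbar : Ubar ∈ Ω)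
    (hηs_conv : StrictConvexOn ℝ Ω ηs)
    (hηs_diff : DifferentiableOn ℝ ηs Ω)
    (hη_diff : ContDiffOn ℝ 1 η Ω)
    (hηs0 : ηs Ubar = 0) (hdηs0 : fderiv ℝ ηs Ubar = 0)
    (hη0 : η Ubar = 0) (hdη0 : fderiv ℝ η Ubar = 0)
    (hGcont : ContinuousOn G Ω) (hG0 : G Ubar = 0)
    (hdiss : ∀ U ∈ Ω, U ≠ Ubar → 0 < fderiv ℝ ηs U (G U))
    (hquad : ∃ r > 0, ∃ c₁ > 0, ∃ c₂ > 0, ∀ U ∈ Ω, ‖U - Ubar‖ < r →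
      c₁ * ‖U - Ubar‖ ^ 2 ≤ fderiv ℝ ηs U (G U) ∧
      |fderiv ℝ η U (G U)| ≤ c₂ * ‖U - Ubar‖ ^ 2)
    (K : Set (ℝ × ℝ)) (hK : IsCompact K) (hKΩ : K ⊆ Ω) :
    ∃ C : ℝ, 0 ≤ C ∧ ∀ U ∈ K,
      0 ≤ fderiv ℝ η U (G U) + C * fderiv ℝ ηs U (G U) := by
  obtain ⟨r, hr, c₁, hc₁, c₂, hc₂, hq⟩ := hquad
  set φ : ℝ × ℝ → ℝ := fun U => fderiv ℝ ηs U (G U) with hφdef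
  set ψ : ℝ × ℝ → ℝ := fun U => fderiv ℝ η U (G U) with hψdef
  set K' : Set (ℝ × ℝ) := K ∩ {U | r ≤ ‖U - Ubar‖} with hK'def
  have hK'K : K' ⊆ K := Set.inter_subset_left
  have hK'c : IsCompact K' :=
    hK.inter_right (isClosed_le continuous_const ((continuous_id.sub continuous_const).norm))
  -- bound for ψ on K'
  have hψcont : ContinuousOn ψ Ω :=
    (hη_diff.continuousOn_fderiv_of_isOpen hΩopen le_rfl).clm_apply hGcont
  obtain ⟨M, hM⟩ := hK'c.exists_bound_of_continuousOn (hψcont.mono (hK'K.trans hKΩ))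
  -- positive lower bound for φ on K'
  have key : ∀ x ∈ K', ∃ δ > 0, {U | δ ≤ φ U} ∈ 𝓝 x := by
    intro x hx
    obtain ⟨hxK, hxr⟩ := hx
    have hxΩ : x ∈ Ω := hKΩ hxK
    have hxne : x ≠ Ubar := by
      intro h
      rw [h] at hxr
      simp only [sub_self, norm_zero, Set.mem_setOf_eq] at hxr
      linarith
    have hφpos : 0 < φ x := hdiss x hxΩ hxne
    -- derivative of t ↦ ηs (x + t • G x) at 0
    have h1 : HasDerivAt (fun t : ℝ => x + t • G x) (G x) 0 := by
      simpa using ((hasDerivAt_id (0 : ℝ)).smul_const (G x)).const_add x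
    have h2 : HasFDerivAt ηs (fderiv ℝ ηs x) (x + (0 : ℝ) • G x) := by
      simpa using (hηs_diff.differentiableAt (hΩopen.mem_nhds hxΩ)).hasFDerivAt
    have hder : HasDerivAt (fun t : ℝ => ηs (x + t • G x)) (φ x) 0 :=
      h2.comp_hasDerivAt 0 h1
    have hslope := hasDerivAt_iff_tendsto_slope.mp hder
    have hslopeIio : Filter.Tendsto (slope (fun t : ℝ => ηs (x + t • G x)) 0)
        (nhdsWithin 0 (Set.Iio 0)) (nhds (φ x)) :=
      hslope.mono_left (nhdsWithin_mono _ (fun t ht => ne_of_lt ht))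
    have hev1 : ∀ᶠ t in nhdsWithin (0:ℝ) (Set.Iio 0),
        φ x / 2 < slope (fun t : ℝ => ηs (x + t • G x)) 0 t :=
      hslopeIio (Ioi_mem_nhds (by linarith))
    have hev2 : ∀ᶠ t in nhdsWithin (0:ℝ) (Set.Iio 0), x + t • G x ∈ Ω := by
      refine Filter.Eventually.filter_mono nhdsWithin_le_nhds ?_
      refine h1.continuousAt.eventually_mem ?_
      simpa using hΩopen.mem_nhds hxΩ
    obtain ⟨t, hst, htΩ, ht0⟩ := (hev1.and (hev2.and eventually_mem_nhdsWithin)).exists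
    simp only [Set.mem_Iio] at ht0
    set q : ℝ × ℝ → ℝ := fun U => (ηs (U + t • G U) - ηs U) / t with hqdef
    have hqx : φ x / 2 < q x := by
      have : slope (fun t : ℝ => ηs (x + t • G x)) 0 t = q x := by
        simp [slope_def_field, hqdef]
      rwa [this] at hst
    -- continuity of q at x
    have hGx : ContinuousAt G x := hGcont.continuousAt (hΩopen.mem_nhds hxΩ)
    have hinner : ContinuousAt (fun U => U + t • G U) x :=
      continuousAt_id.add (hGx.const_smul t)
    have hηsy : ContinuousAt ηs (x + t • G x) :=
      hηs_diff.continuousOn.continuousAt (hΩopen.mem_nhds htΩ)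
    have hηsx : ContinuousAt ηs x :=
      hηs_diff.continuousOn.continuousAt (hΩopen.mem_nhds hxΩ)
    have hcomp : ContinuousAt (fun U => ηs (U + t • G U)) x :=
      ContinuousAt.comp (f := fun U => U + t • G U) hηsy hinner
    have hqc : ContinuousAt q x := (hcomp.sub hηsx).div_const t
    have E1 : ∀ᶠ U in nhds x, φ x / 2 < q U := hqc.eventually_mem (Ioi_mem_nhds hqx)
    have E2 : ∀ᶠ U in nhds x, U ∈ Ω := hΩopen.eventually_mem hxΩ
    have E3 : ∀ᶠ U in nhds x, U + t • G U ∈ Ω :=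
      hinner.eventually_mem (hΩopen.mem_nhds htΩ)
    refine ⟨φ x / 2, by linarith, ?_⟩
    filter_upwards [E1, E2, E3] with U hU1 hU2 hU3
    -- subgradient inequality gives q U ≤ φ U
    have hsub := subgrad_ineq hηs_conv.convexOn hU2 hU3
      (hηs_diff.differentiableAt (hΩopen.mem_nhds hU2))
    have hsimp : (U + t • G U) - U = t • G U := by abel
    rw [hsimp] at hsub
    have hmap : fderiv ℝ ηs U (t • G U) = t * φ U := by
      simp [hφdef]
    rw [hmap] at hsub
    have hqU : q U ≤ φ U := by
      rw [hqdef]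
      rw [div_le_iff_of_neg ht0]
      linarith
    exact le_trans (le_of_lt hU1) hqU
  choose δ hδpos hδnbhd using key
  -- finite subcover
  obtain ⟨s, hs⟩ := hK'c.elim_nhds_subcover' (fun x hx => {U | δ x hx ≤ φ U}) hδnbhd
  -- lower bound on K'
  have hfar : ∃ δ₀ > 0, ∀ U ∈ K', δ₀ ≤ φ U := by
    rcases s.eq_empty_or_nonempty with hse | hse
    · refine ⟨1, one_pos, fun U hU => ?_⟩
      have := hs hU
      simp [hse] at this
    · refine ⟨s.inf' hse (fun x => δ x.1 x.2), ?_, ?_⟩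
      · rw [gt_iff_lt, Finset.lt_inf'_iff]
        exact fun x _ => hδpos x.1 x.2
      · intro U hU
        have := hs hU
        simp only [Set.mem_iUnion] at this
        obtain ⟨x, hxs, hxU⟩ := this
        exact le_trans (Finset.inf'_le _ hxs) hxU
  obtain ⟨δ₀, hδ₀, hδ₀K⟩ := hfar
  set M' : ℝ := max M 0 with hM'def
  refine ⟨max (c₂ / c₁) (M' / δ₀), le_max_of_le_left (div_nonneg hc₂.le hc₁.le), ?_⟩
  intro U hU
  set C : ℝ := max (c₂ / c₁) (M' / δ₀) with hCdef
  have hC1 : c₂ / c₁ ≤ C := le_max_left _ _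
  have hC2 : M' / δ₀ ≤ C := le_max_right _ _
  have hC0 : 0 ≤ C := le_trans (div_nonneg (le_max_right M 0) hδ₀.le) hC2
  by_cases hnear : ‖U - Ubar‖ < r
  · obtain ⟨hφb, hψb⟩ := hq U (hKΩ hU) hnear
    have hψlb : -(c₂ * ‖U - Ubar‖ ^ 2) ≤ ψ U := neg_le_of_abs_le hψb
    have hc21 : c₂ ≤ C * c₁ := by
      rw [div_le_iff₀ hc₁] at hC1
      linarith
    have hφ0 : 0 ≤ φ U := le_trans (by positivity) hφb
    have : c₂ * ‖U - Ubar‖ ^ 2 ≤ C * φ U := by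
      calc c₂ * ‖U - Ubar‖ ^ 2 ≤ (C * c₁) * ‖U - Ubar‖ ^ 2 :=
            mul_le_mul_of_nonneg_right hc21 (sq_nonneg _)
        _ = C * (c₁ * ‖U - Ubar‖ ^ 2) := by ring
        _ ≤ C * φ U := mul_le_mul_of_nonneg_left hφb hC0
    show 0 ≤ ψ U + C * φ U
    linarith
  · have hUK' : U ∈ K' := ⟨hU, by simpa using le_of_not_gt hnear⟩
    have hφlb := hδ₀K U hUK'
    have hψub : |ψ U| ≤ M' := le_trans (by simpa using hM U hUK') (le_max_left M 0)
    have hMC : M' ≤ C * δ₀ := by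
      rw [div_le_iff₀ hδ₀] at hC2
      linarith
    have : C * δ₀ ≤ C * φ U := mul_le_mul_of_nonneg_left hφlb hC0
    have hψlb : -M' ≤ ψ U := neg_le_of_abs_le hψub
    show 0 ≤ ψ U + C * φ U
    linarith
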